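/- Let H be a triangle-free finite simple graph with vertex set {1,…,N} and m edges, and suppose the edge set of H is partitioned into k (possibly empty) parts C_1, …, C_k with total cost Z = Σ_{i=1}^k cost(C_i). Then H has a vertex cover of size at most 4k + 3Z − 3m. -/

import Mathlib

open SimpleGraph Finset

/-- For a graph on vertex set `Fin N`, the edge `e = {i, j}` is identified with the
point `x_e = b_i + b_j` in `ℝ^N`, where `b_i` is the `i`-th standard basis vector. -/
noncomputable def edgePoint (N : ℕ) (e : Sym2 (Fin N)) : EuclideanSpace ℝ (Fin N) :=
  Sym2.lift ⟨fun i j => EuclideanSpace.single i (1 : ℝ) + EuclideanSpace.single j (1 : ℝ),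
    fun _ _ => add_comm _ _⟩ e

/-- The (k-means) cost of a finite set `C` of edges:
`cost(C) = inf_{c ∈ ℝ^N} Σ_{e ∈ C} ‖x_e − c‖²`. -/
noncomputable def cost (N : ℕ) (C : Finset (Sym2 (Fin N))) : ℝ :=
  ⨅ c : EuclideanSpace ℝ (Fin N), ∑ e ∈ C, ‖edgePoint N e - c‖ ^ 2

/-- A set `S` of vertices is a vertex cover of `H` if every edge of `H` has at
least one endpoint in `S`. -/
def IsVertexCover {W : Type*} (H : SimpleGraph W) (S : Set W) : Prop :=
  ∀ ⦃u v : W⦄, H.Adj u v → u ∈ S ∨ v ∈ S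

/-! ### Auxiliary combinatorial development -/

/-- The degree of a vertex `v` with respect to a finite set of edges `E`. -/
def edeg {N : ℕ} (E : Finset (Sym2 (Fin N))) (v : Fin N) : ℕ :=
  (E.filter (fun e => v ∈ e)).card

namespace Statement12Aux

variable {N : ℕ}

lemma edeg_eq_sum (E : Finset (Sym2 (Fin N))) (v : Fin N) :
    edeg E v = ∑ e ∈ E, if v ∈ e then 1 else 0 := Finset.card_filter _ _

lemma common_le_one {e e' : Sym2 (Fin N)} (h : e ≠ e') :
    (univ.filter (fun v => v ∈ e ∧ v ∈ e')).card ≤ 1 := by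
  refine Finset.card_le_one.2 ?_
  intro a ha b hb
  simp only [mem_filter] at ha hb
  by_contra hab
  exact h (((Sym2.mem_and_mem_iff hab).1 ⟨ha.2.1, hb.2.1⟩).trans
    ((Sym2.mem_and_mem_iff hab).1 ⟨ha.2.2, hb.2.2⟩).symm)

lemma common_self {e : Sym2 (Fin N)} (h : ¬ e.IsDiag) :
    (univ.filter (fun v => v ∈ e)).card = 2 := by
  induction e using Sym2.ind with
  | _ i j =>
    have hij : i ≠ j := by simpa using h
    have : (univ.filter (fun v => v ∈ s(i,j))) = {i, j} := by
      ext v; simp [Sym2.mem_iff]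
    rw [this, Finset.card_insert_of_notMem (by simpa using hij), Finset.card_singleton]

lemma sq_identity (E : Finset (Sym2 (Fin N))) :
    ∑ v, edeg E v ^ 2 = ∑ e ∈ E, ∑ e' ∈ E, (univ.filter (fun v => v ∈ e ∧ v ∈ e')).card := by
  simp only [edeg_eq_sum, sq, Finset.sum_mul_sum]
  rw [Finset.sum_comm]
  refine Finset.sum_congr rfl fun e _ => ?_
  rw [Finset.sum_comm]
  refine Finset.sum_congr rfl fun e' _ => ?_
  rw [Finset.card_filter]
  refine Finset.sum_congr rfl fun v _ => ?_
  split_ifs <;> simp_all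

lemma lemmaB (E : Finset (Sym2 (Fin N))) (hnd : ∀ e ∈ E, ¬ e.IsDiag) :
    ∑ v, edeg E v ^ 2 ≤ E.card * (E.card + 1) := by
  rw [sq_identity]
  calc ∑ e ∈ E, ∑ e' ∈ E, (univ.filter (fun v => v ∈ e ∧ v ∈ e')).card
      ≤ ∑ e ∈ E, (E.card + 1) := by
        refine Finset.sum_le_sum fun e he => ?_
        rw [← Finset.sum_erase_add _ _ he]
        have h1 : ∑ e' ∈ E.erase e, (univ.filter (fun v => v ∈ e ∧ v ∈ e')).card
            ≤ E.card - 1 := by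
          calc _ ≤ ∑ e' ∈ E.erase e, 1 := Finset.sum_le_sum fun e' he' =>
                common_le_one (Finset.ne_of_mem_erase he').symm
            _ = E.card - 1 := by rw [Finset.sum_const, smul_eq_mul, mul_one,
                Finset.card_erase_of_mem he]
        have h2 : (univ.filter (fun v => v ∈ e ∧ v ∈ e)).card = 2 := by
          simp only [and_self]
          exact common_self (hnd e he)
        have hc : 1 ≤ E.card := Finset.card_pos.2 ⟨e, he⟩
        omega
    _ = E.card * (E.card + 1) := by rw [Finset.sum_const, smul_eq_mul]

lemma handshake (E : Finset (Sym2 (Fin N))) (hnd : ∀ e ∈ E, ¬ e.IsDiag) :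
    ∑ v, edeg E v = 2 * E.card := by
  simp only [edeg_eq_sum]
  rw [Finset.sum_comm]
  have : ∀ e ∈ E, (∑ v : Fin N, if v ∈ e then 1 else 0) = 2 := fun e he => by
    rw [← Finset.card_filter]
    exact common_self (hnd e he)
  rw [Finset.sum_congr rfl this, Finset.sum_const, smul_eq_mul, mul_comm]

lemma crossLemma (E : Finset (Sym2 (Fin N)))
    (htf : ∀ a b c : Fin N, s(a,b) ∈ E → s(a,c) ∈ E → s(b,c) ∈ E → False)
    (v₀ : Fin N) :
    ∑ v, edeg (E.filter (fun e => ¬ v₀ ∈ e)) v * edeg (E.filter (fun e => v₀ ∈ e)) v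
      ≤ (E.filter (fun e => ¬ v₀ ∈ e)).card := by
  set F := E.filter (fun e => ¬ v₀ ∈ e) with hF
  set st := E.filter (fun e => v₀ ∈ e) with hst
  set A : Finset (Fin N) := univ.filter (fun v => v ≠ v₀ ∧ s(v₀, v) ∈ E) with hA
  have hpt : ∀ v : Fin N, edeg F v * edeg st v ≤ if v ∈ A then edeg F v else 0 := by
    intro v
    by_cases hv : v = v₀
    · have h0 : edeg F v = 0 := by
        rw [edeg, Finset.card_eq_zero, Finset.eq_empty_iff_forall_notMem]
        intro e he
        rw [hF, Finset.filter_filter, Finset.mem_filter] at he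
        exact he.2.1 (hv ▸ he.2.2)
      simp [h0]
    · by_cases hd : edeg st v = 0
      · rw [hd, mul_zero]
        split <;> simp
      · have hmem : ∀ g ∈ st.filter (fun e => v ∈ e), g = s(v₀, v) := by
          intro g hg
          rw [hst, Finset.filter_filter, Finset.mem_filter] at hg
          exact (Sym2.mem_and_mem_iff (fun h => hv h.symm)).1 ⟨hg.2.1, hg.2.2⟩
        have hle1 : edeg st v ≤ 1 := Finset.card_le_one.2 fun a ha b hb =>
          (hmem a ha).trans (hmem b hb).symm
        have hvA : v ∈ A := by
          obtain ⟨g, hg⟩ := Finset.card_pos.1 (Nat.pos_of_ne_zero hd)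
          have hgE : g ∈ E := by
            rw [hst, Finset.filter_filter, Finset.mem_filter] at hg
            exact hg.1
          rw [hA, Finset.mem_filter]
          exact ⟨Finset.mem_univ v, hv, (hmem g hg) ▸ hgE⟩
        rw [if_pos hvA]
        calc edeg F v * edeg st v ≤ edeg F v * 1 := Nat.mul_le_mul_left _ hle1
          _ = edeg F v := mul_one _
  calc ∑ v, edeg F v * edeg st v ≤ ∑ v, if v ∈ A then edeg F v else 0 :=
        Finset.sum_le_sum fun v _ => hpt v
    _ = ∑ v ∈ A, edeg F v := by rw [Finset.sum_ite_mem, Finset.univ_inter]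
    _ = ∑ f ∈ F, (A.filter (fun v => v ∈ f)).card := by
        simp only [edeg_eq_sum]
        rw [Finset.sum_comm]
        exact Finset.sum_congr rfl fun f _ => (Finset.card_filter _ _).symm
    _ ≤ ∑ f ∈ F, 1 := by
        refine Finset.sum_le_sum fun f hf => Finset.card_le_one.2 ?_
        intro a ha b hb
        simp only [hA, Finset.mem_filter, Finset.mem_univ, true_and] at ha hb
        by_contra hab
        have hfE : f ∈ E := (Finset.mem_filter.1 hf).1
        have hfab : f = s(a, b) := (Sym2.mem_and_mem_iff hab).1 ⟨ha.2, hb.2⟩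
        exact htf v₀ a b ha.1.2 hb.1.2 (hfab ▸ hfE)
    _ = F.card := by simp

/-- The main combinatorial lemma: a triangle-free edge set `E` with `m` edges has a
vertex cover `S` with `m * |S| + 3 * Σ_v deg(v)² ≤ 3m² + 4m`, and `|S| ≤ 2m`. -/
lemma mainLemma (n : ℕ) : ∀ (E : Finset (Sym2 (Fin N))), E.card ≤ n →
    (∀ e ∈ E, ¬ e.IsDiag) →
    (∀ a b c : Fin N, s(a,b) ∈ E → s(a,c) ∈ E → s(b,c) ∈ E → False) →
    ∃ S : Finset (Fin N), (∀ e ∈ E, ∃ v ∈ S, v ∈ e) ∧ S.card ≤ 2 * E.card ∧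
      E.card * S.card + 3 * ∑ v, edeg E v ^ 2 ≤ 3 * E.card ^ 2 + 4 * E.card := by
  induction n with
  | zero =>
    intro E hcard hnd htf
    have : E = ∅ := Finset.card_eq_zero.1 (Nat.le_zero.1 hcard)
    subst this
    exact ⟨∅, by simp, by simp, by simp [edeg]⟩
  | succ n ih =>
    intro E hcard hnd htf
    rcases Finset.eq_empty_or_nonempty E with hE | hE
    · subst hE
      exact ⟨∅, by simp, by simp, by simp [edeg]⟩
    obtain ⟨e₀, he₀⟩ := hE
    have hNne : (univ : Finset (Fin N)).Nonempty := by
      induction e₀ using Sym2.ind with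
      | _ i j => exact ⟨i, Finset.mem_univ i⟩
    obtain ⟨v₀, -, hv₀⟩ := Finset.exists_max_image univ (edeg E) hNne
    set st := E.filter (fun e => v₀ ∈ e) with hst
    set F := E.filter (fun e => ¬ v₀ ∈ e) with hF
    have hsplit : st.card + F.card = E.card := Finset.card_filter_add_card_filter_not _
    set m := E.card with hm
    set Δ := edeg E v₀ with hΔ
    have hstcard : st.card = Δ := rfl
    have hm1 : 1 ≤ m := Finset.card_pos.2 ⟨e₀, he₀⟩
    have hΔ1 : 1 ≤ Δ := by
      induction e₀ using Sym2.ind with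
      | _ i j =>
        have h1 : edeg E i ≤ Δ := hv₀ i (Finset.mem_univ i)
        have hi : 1 ≤ edeg E i := Finset.card_pos.2 ⟨s(i,j), Finset.mem_filter.2
          ⟨he₀, Sym2.mem_mk_left i j⟩⟩
        omega
    have hdeg : ∀ v, edeg E v = edeg F v + edeg st v := by
      intro v
      rw [edeg, edeg, edeg, hF, hst, Finset.filter_filter, Finset.filter_filter,
        ← Finset.card_union_of_disjoint]
      · congr 1
        ext e
        simp only [Finset.mem_union, Finset.mem_filter]
        tauto
      · rw [Finset.disjoint_filter]
        tauto
    have hndF : ∀ e ∈ F, ¬ e.IsDiag := fun e he => hnd e (Finset.mem_filter.1 he).1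
    have hndst : ∀ e ∈ st, ¬ e.IsDiag := fun e he => hnd e (Finset.mem_filter.1 he).1
    by_cases hFe : F = ∅
    · -- star case: S = {v₀}
      refine ⟨{v₀}, ?_, ?_, ?_⟩
      · intro e he
        refine ⟨v₀, Finset.mem_singleton_self v₀, ?_⟩
        by_contra hv
        exact Finset.notMem_empty e (hFe ▸ Finset.mem_filter.2 ⟨he, hv⟩)
      · simpa using by omega
      · have hB := lemmaB E hnd
        rw [Finset.card_singleton]
        have hBe : m * (m + 1) = m ^ 2 + m := by ring
        linarith [hB]
    · have hF1 : 1 ≤ F.card := Finset.card_pos.2 (Finset.nonempty_of_ne_empty hFe)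
      have hm2 : 2 ≤ m := by omega
      by_cases hΔ2 : Δ = 1
      · -- matching case: all degrees at most 1
        have hd1 : ∀ v, edeg E v ≤ 1 := fun v => hΔ2 ▸ hv₀ v (Finset.mem_univ v)
        refine ⟨univ.filter (fun v => 0 < edeg E v), ?_, ?_, ?_⟩
        · intro e he
          induction e using Sym2.ind with
          | _ i j =>
            refine ⟨i, Finset.mem_filter.2 ⟨Finset.mem_univ i, ?_⟩, Sym2.mem_mk_left i j⟩
            exact Finset.card_pos.2 ⟨s(i,j), Finset.mem_filter.2 ⟨he, Sym2.mem_mk_left i j⟩⟩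
        · calc (univ.filter (fun v => 0 < edeg E v)).card
              ≤ ∑ v ∈ univ.filter (fun v => 0 < edeg E v), edeg E v := by
                rw [Finset.card_eq_sum_ones]
                exact Finset.sum_le_sum fun v hv => (Finset.mem_filter.1 hv).2
            _ ≤ ∑ v, edeg E v := Finset.sum_le_sum_of_subset (Finset.filter_subset _ _)
            _ = 2 * m := handshake E hnd
        · have hsq : ∑ v, edeg E v ^ 2 ≤ 2 * m := by
            calc ∑ v, edeg E v ^ 2 ≤ ∑ v, edeg E v := Finset.sum_le_sum fun v _ => by
                  have := hd1 v; interval_cases (edeg E v) <;> simp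
              _ = 2 * m := handshake E hnd
          have hcard2 : (univ.filter (fun v => 0 < edeg E v)).card ≤ 2 * m := by
            calc (univ.filter (fun v => 0 < edeg E v)).card
                ≤ ∑ v ∈ univ.filter (fun v => 0 < edeg E v), edeg E v := by
                  rw [Finset.card_eq_sum_ones]
                  exact Finset.sum_le_sum fun v hv => (Finset.mem_filter.1 hv).2
              _ ≤ ∑ v, edeg E v := Finset.sum_le_sum_of_subset (Finset.filter_subset _ _)
              _ = 2 * m := handshake E hnd
          have hma : m * (univ.filter (fun v => 0 < edeg E v)).card ≤ m * (2 * m) :=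
            Nat.mul_le_mul_left _ hcard2
          have hmb : 2 * m ≤ m * m := Nat.mul_le_mul_right m hm2
          have hmc : m * (2 * m) = 2 * (m * m) := by ring
          have hmd : m ^ 2 = m * m := sq m
          linarith [hsq, hma, hmb]
      · -- main case Δ ≥ 2 : induction on F
        have hΔ2' : 2 ≤ Δ := by omega
        have hFle : F.card ≤ n := by omega
        obtain ⟨SF, hSF1, hSF2, hSF3⟩ := ih F hFle hndF
          (fun a b c h1 h2 h3 => htf a b c (Finset.mem_filter.1 h1).1
            (Finset.mem_filter.1 h2).1 (Finset.mem_filter.1 h3).1)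
        refine ⟨insert v₀ SF, ?_, ?_, ?_⟩
        · intro e he
          by_cases hv : v₀ ∈ e
          · exact ⟨v₀, Finset.mem_insert_self _ _, hv⟩
          · obtain ⟨w, hw1, hw2⟩ := hSF1 e (Finset.mem_filter.2 ⟨he, hv⟩)
            exact ⟨w, Finset.mem_insert_of_mem hw1, hw2⟩
        · calc (insert v₀ SF).card ≤ SF.card + 1 := Finset.card_insert_le _ _
            _ ≤ 2 * m := by omega
        · -- the key inequality
          have hsum : ∑ v, edeg E v ^ 2 =
              ∑ v, edeg F v ^ 2 + 2 * ∑ v, edeg F v * edeg st v + ∑ v, edeg st v ^ 2 := by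
            have hv : ∀ v : Fin N, edeg E v ^ 2
                = edeg F v ^ 2 + 2 * (edeg F v * edeg st v) + edeg st v ^ 2 := fun v => by
              rw [hdeg v]; ring
            rw [Finset.sum_congr rfl fun v _ => hv v]
            simp only [Finset.sum_add_distrib, Finset.mul_sum]
          have hcross : ∑ v, edeg F v * edeg st v ≤ F.card := crossLemma E htf v₀
          have hstsq : ∑ v, edeg st v ^ 2 ≤ Δ * (Δ + 1) := hstcard ▸ lemmaB st hndst
          have hcard : (insert v₀ SF).card ≤ SF.card + 1 := Finset.card_insert_le _ _
          have hmsum : m = Δ + F.card := by omega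
          set f := F.card
          set s := SF.card
          have key : m * (s + 1) + (3 * f ^ 2 + 4 * f) + 6 * f + 3 * (Δ * (Δ + 1))
              ≤ 3 * m ^ 2 + 4 * m + f * s := by
            have h1 : Δ * s ≤ 2 * (Δ * f) := by
              calc Δ * s ≤ Δ * (2 * f) := Nat.mul_le_mul_left _ hSF2
                _ = 2 * (Δ * f) := by ring
            have h2 : 7 * f ≤ 4 * (Δ * f) := by
              calc 7 * f ≤ (4 * Δ) * f := Nat.mul_le_mul_right f (by omega)
                _ = 4 * (Δ * f) := by ring
            have e1 : m * (s + 1) = Δ * s + f * s + Δ + f := by rw [hmsum]; ring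
            have e2 : 3 * m ^ 2 + 4 * m
                = 3 * Δ ^ 2 + 6 * (Δ * f) + 3 * f ^ 2 + 4 * Δ + 4 * f := by rw [hmsum]; ring
            have e3 : 3 * (Δ * (Δ + 1)) = 3 * Δ ^ 2 + 3 * Δ := by ring
            rw [e1, e2, e3]
            linarith [h1, h2]
          calc m * (insert v₀ SF).card + 3 * ∑ v, edeg E v ^ 2
              ≤ m * (s + 1) + 3 * ∑ v, edeg E v ^ 2 := by
                exact Nat.add_le_add_right (Nat.mul_le_mul_left _ hcard) _
            _ ≤ m * (s + 1) + (3 * ∑ v, edeg F v ^ 2 + 6 * f + 3 * (Δ * (Δ + 1))) := by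
                rw [hsum]
                have : 3 * (∑ v, edeg F v ^ 2 + 2 * ∑ v, edeg F v * edeg st v
                    + ∑ v, edeg st v ^ 2) ≤ 3 * ∑ v, edeg F v ^ 2 + 6 * f
                    + 3 * (Δ * (Δ + 1)) := by
                  have := hcross; have := hstsq; omega
                omega
            _ ≤ 3 * m ^ 2 + 4 * m := by linarith [hSF3, key]

/-! ### The analytic part -/

lemma edgePoint_apply (e : Sym2 (Fin N)) (he : ¬ e.IsDiag) (v : Fin N) :
    edgePoint N e v = if v ∈ e then 1 else 0 := by
  induction e using Sym2.ind with
  | _ i j =>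
    have hij : i ≠ j := by simpa using he
    show (EuclideanSpace.single i (1:ℝ) + EuclideanSpace.single j (1:ℝ)) v = _
    rw [PiLp.add_apply, EuclideanSpace.single_apply, EuclideanSpace.single_apply]
    simp only [Sym2.mem_iff]
    by_cases h1 : v = i <;> by_cases h2 : v = j <;> simp_all

lemma norm_sq_eval (y : EuclideanSpace ℝ (Fin N)) : ‖y‖ ^ 2 = ∑ v, (y v) ^ 2 := by
  rw [EuclideanSpace.norm_eq, Real.sq_sqrt (by positivity)]
  exact Finset.sum_congr rfl fun v _ => by rw [Real.norm_eq_abs, sq_abs]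

lemma cost_nonneg (C : Finset (Sym2 (Fin N))) : 0 ≤ cost N C :=
  le_ciInf fun c => Finset.sum_nonneg fun e _ => by positivity

lemma cost_lb (C : Finset (Sym2 (Fin N))) (hnd : ∀ e ∈ C, ¬ e.IsDiag)
    (hne : C.Nonempty) :
    2 * (C.card : ℝ) ^ 2 - ∑ v, (edeg C v : ℝ) ^ 2 ≤ C.card * cost N C := by
  set m : ℝ := (C.card : ℝ) with hm
  have hm0 : 0 < m := by rw [hm]; exact_mod_cast Finset.card_pos.2 hne
  have hd : ∀ v : Fin N, (edeg C v : ℝ) = ∑ e ∈ C, if v ∈ e then (1:ℝ) else 0 := by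
    intro v
    rw [edeg, Finset.card_filter]
    push_cast
    exact Finset.sum_congr rfl fun e _ => by split_ifs <;> simp
  have hhs : ∑ v, (edeg C v : ℝ) = 2 * m := by
    rw [Finset.sum_congr rfl fun v _ => hd v, Finset.sum_comm]
    have h2 : ∀ e ∈ C, (∑ v : Fin N, if v ∈ e then (1:ℝ) else 0) = 2 := by
      intro e he
      induction e using Sym2.ind with
      | _ i j =>
        have hij : i ≠ j := by simpa using hnd _ he
        rw [Finset.sum_boole]
        have hfil : (univ.filter (fun v => v ∈ s(i,j))) = {i, j} := by
          ext v; simp [Sym2.mem_iff]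
        rw [hfil, Finset.card_insert_of_notMem (by simpa using hij),
          Finset.card_singleton]
        norm_num
    rw [Finset.sum_congr rfl h2, Finset.sum_const, nsmul_eq_mul, hm, mul_comm]
  have hkey : ∀ c : EuclideanSpace ℝ (Fin N),
      (2 * m ^ 2 - ∑ v, (edeg C v : ℝ) ^ 2) / m ≤ ∑ e ∈ C, ‖edgePoint N e - c‖ ^ 2 := by
    intro c
    rw [div_le_iff₀ hm0]
    have hexp : (∑ e ∈ C, ‖edgePoint N e - c‖ ^ 2)
        = ∑ v, ((edeg C v : ℝ) - 2 * c v * (edeg C v : ℝ) + m * (c v) ^ 2) := by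
      have h1 : ∀ e ∈ C, ‖edgePoint N e - c‖ ^ 2
          = ∑ v, ((if v ∈ e then (1:ℝ) else 0) - c v) ^ 2 := by
        intro e he
        rw [norm_sq_eval]
        refine Finset.sum_congr rfl fun v _ => ?_
        rw [PiLp.sub_apply, edgePoint_apply e (hnd e he)]
      rw [Finset.sum_congr rfl h1, Finset.sum_comm]
      refine Finset.sum_congr rfl fun v _ => ?_
      have : ∀ e ∈ C, ((if v ∈ e then (1:ℝ) else 0) - c v) ^ 2
          = (if v ∈ e then (1:ℝ) else 0) - 2 * c v * (if v ∈ e then (1:ℝ) else 0)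
            + (c v) ^ 2 := by
        intro e _
        split_ifs <;> ring
      rw [Finset.sum_congr rfl this, Finset.sum_add_distrib, Finset.sum_sub_distrib,
        ← Finset.mul_sum, ← hd v, Finset.sum_const, nsmul_eq_mul, ← hm]
    rw [hexp]
    have hper : ∀ v : Fin N, m * (edeg C v : ℝ) - (edeg C v : ℝ) ^ 2
        ≤ m * ((edeg C v : ℝ) - 2 * c v * (edeg C v : ℝ) + m * (c v) ^ 2) := by
      intro v
      nlinarith [sq_nonneg (m * c v - (edeg C v : ℝ))]
    calc 2 * m ^ 2 - ∑ v, (edeg C v : ℝ) ^ 2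
        = ∑ v, (m * (edeg C v : ℝ) - (edeg C v : ℝ) ^ 2) := by
          rw [Finset.sum_sub_distrib, ← Finset.mul_sum, hhs]; ring
      _ ≤ ∑ v, m * ((edeg C v : ℝ) - 2 * c v * (edeg C v : ℝ) + m * (c v) ^ 2) :=
          Finset.sum_le_sum fun v _ => hper v
      _ = (∑ v, ((edeg C v : ℝ) - 2 * c v * (edeg C v : ℝ) + m * (c v) ^ 2)) * m := by
          rw [← Finset.mul_sum]; ring
  have hfin : (2 * m ^ 2 - ∑ v, (edeg C v : ℝ) ^ 2) / m ≤ cost N C := le_ciInf hkey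
  calc 2 * m ^ 2 - ∑ v, (edeg C v : ℝ) ^ 2
      = m * ((2 * m ^ 2 - ∑ v, (edeg C v : ℝ) ^ 2) / m) := by field_simp
    _ ≤ m * cost N C := mul_le_mul_of_nonneg_left hfin (le_of_lt hm0)

/-- The per-cluster bound. -/
lemma perCluster (C : Finset (Sym2 (Fin N))) (hnd : ∀ e ∈ C, ¬ e.IsDiag)
    (htf : ∀ a b c : Fin N, s(a,b) ∈ C → s(a,c) ∈ C → s(b,c) ∈ C → False) :
    ∃ S : Finset (Fin N), (∀ e ∈ C, ∃ v ∈ S, v ∈ e) ∧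
      (S.card : ℝ) ≤ 4 + 3 * cost N C - 3 * C.card := by
  obtain ⟨S, hS1, hS2, hS3⟩ := mainLemma C.card C le_rfl hnd htf
  refine ⟨S, hS1, ?_⟩
  rcases Finset.eq_empty_or_nonempty C with hCe | hne
  · subst hCe
    simp only [Finset.card_empty, mul_zero, Nat.le_zero] at hS2
    rw [hS2]
    have h0 := cost_nonneg (N := N) (∅ : Finset (Sym2 (Fin N)))
    simp only [Finset.card_empty, Nat.cast_zero]
    push_cast
    linarith
  · have hm0 : (0:ℝ) < (C.card : ℝ) := by exact_mod_cast Finset.card_pos.2 hne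
    have hcast : (C.card : ℝ) * S.card + 3 * ∑ v, (edeg C v : ℝ) ^ 2
        ≤ 3 * (C.card : ℝ) ^ 2 + 4 * C.card := by exact_mod_cast hS3
    have hlb := cost_lb C hnd hne
    have hmul : (C.card : ℝ) * S.card ≤ (C.card : ℝ) * (4 + 3 * cost N C - 3 * C.card) := by
      nlinarith [hcast, hlb]
    exact le_of_mul_le_mul_left hmul hm0

end Statement12Aux

open Statement12Aux in
/-- Let `H` be a triangle-free finite simple graph on vertex set
`{1, …, N}` with `m` edges, and suppose the edge set of `H` is partitioned into `k`
(possibly empty) parts `C_1, …, C_k` with total cost `Z = Σ_i cost(C_i)`. Then `H` has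
a vertex cover of size at most `4k + 3Z − 3m`. -/
theorem statement12 {N : ℕ} (H : SimpleGraph (Fin N)) [DecidableRel H.Adj]
    (htf : H.CliqueFree 3) (m : ℕ) (hm : H.edgeFinset.card = m)
    (k : ℕ) (CC : Fin k → Finset (Sym2 (Fin N)))
    (hdisj : ∀ i j, i ≠ j → Disjoint (CC i) (CC j))
    (hpart : ∀ e, e ∈ H.edgeFinset ↔ ∃ i, e ∈ CC i)
    (Z : ℝ) (hZ : Z = ∑ i, cost N (CC i)) :
    ∃ S : Finset (Fin N), _root_.IsVertexCover H ↑S ∧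
      (S.card : ℝ) ≤ 4 * k + 3 * Z - 3 * m := by
  have hsub : ∀ i, CC i ⊆ H.edgeFinset := fun i e he => (hpart e).2 ⟨i, he⟩
  have hnd : ∀ i, ∀ e ∈ CC i, ¬ e.IsDiag := fun i e he =>
    (H.not_isDiag_of_mem_edgeSet (SimpleGraph.mem_edgeFinset.1 (hsub i he)))
  have htf' : ∀ i, ∀ a b c : Fin N,
      s(a,b) ∈ CC i → s(a,c) ∈ CC i → s(b,c) ∈ CC i → False := by
    intro i a b c h1 h2 h3
    have hab : H.Adj a b := SimpleGraph.mem_edgeFinset.1 (hsub i h1)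
    have hac : H.Adj a c := SimpleGraph.mem_edgeFinset.1 (hsub i h2)
    have hbc : H.Adj b c := SimpleGraph.mem_edgeFinset.1 (hsub i h3)
    exact htf {a, b, c} (SimpleGraph.is3Clique_triple_iff.2 ⟨hab, hac, hbc⟩)
  choose S hS1 hS2 using fun i => perCluster (CC i) (hnd i) (htf' i)
  refine ⟨univ.biUnion S, ?_, ?_⟩
  · intro u v huv
    have he : s(u,v) ∈ H.edgeFinset := SimpleGraph.mem_edgeFinset.2 huv
    obtain ⟨i, hi⟩ := (hpart _).1 he
    obtain ⟨w, hw, hwm⟩ := hS1 i _ hi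
    have hwS : w ∈ univ.biUnion S := Finset.mem_biUnion.2 ⟨i, Finset.mem_univ i, hw⟩
    rcases Sym2.mem_iff.1 hwm with h | h
    · exact Or.inl (by rw [← h]; exact hwS)
    · exact Or.inr (by rw [← h]; exact hwS)
  · have hedge : H.edgeFinset = univ.biUnion CC := by
      ext e
      simp only [Finset.mem_biUnion, Finset.mem_univ, true_and]
      exact hpart e
    have hmsum : ∑ i, (CC i).card = m := by
      rw [← hm, hedge, Finset.card_biUnion (fun i _ j _ hij => hdisj i j hij)]
    have hmsumR : ∑ i, ((CC i).card : ℝ) = (m : ℝ) := by exact_mod_cast hmsum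
    calc ((univ.biUnion S).card : ℝ)
        ≤ (∑ i, (S i).card : ℕ) := by exact_mod_cast Finset.card_biUnion_le
      _ = ∑ i, ((S i).card : ℝ) := by push_cast; rfl
      _ ≤ ∑ i, (4 + 3 * cost N (CC i) - 3 * ((CC i).card : ℝ)) :=
          Finset.sum_le_sum fun i _ => hS2 i
      _ = 4 * k + 3 * Z - 3 * m := by
          rw [Finset.sum_sub_distrib, Finset.sum_add_distrib, Finset.sum_const,
            Finset.card_univ, Fintype.card_fin, ← Finset.mul_sum, ← Finset.mul_sum,
            hmsumR, ← hZ, nsmul_eq_mul]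
          ring
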